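/- Let K be a henselian valued field with residue field k of characteristic ≠ 2, t ∈ K of odd valuation, and Q = ⟨a₁,…,aₙ⟩ with all aᵢ units of the valuation ring. If the residue form of Q is isotropic over k, then ⟨1,t⟩ ⊗ Q is isotropic over K. -/

import Mathlib

/-- Converse for henselian fields: if `K` is a henselian valued field (Hensel's Lemma
holds: a simple root in the residue field `k` of a polynomial over the valuation ring
lifts), the residue field has characteristic `≠ 2`, `t ∈ K` has odd valuation, and
`Q = ⟨a₁,…,aₙ⟩` has unit coefficients whose residue form is isotropic over `k`,
then `⟨1,t⟩ ⊗ Q` is isotropic over `K`. -/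
theorem stmt2 {K : Type*} [Field K] {Γ₀ : Type*} [LinearOrderedCommGroupWithZero Γ₀]
    (v : Valuation K Γ₀) (hv : Function.Surjective v)
    {k : Type*} [Field k] (hk2 : (2 : k) ≠ 0)
    (π : v.integer →+* k) (hπ : Function.Surjective π)
    (hker : ∀ x : v.integer, π x = 0 ↔ v (x : K) < 1)
    (hhens : ∀ (P : Polynomial v.integer) (α : k),
      (P.map π).eval α = 0 → (Polynomial.derivative (P.map π)).eval α ≠ 0 →
      ∃ β : v.integer, π β = α ∧ P.eval β = 0)
    (t : K) (ht : ¬ ∃ s : Γ₀, v t = s * s)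
    {n : ℕ} (a : Fin n → v.integer) (ha : ∀ i, v ((a i : K)) = 1)
    (hres : ∃ x : Fin n → k, x ≠ 0 ∧ ∑ i, π (a i) * x i ^ 2 = 0) :
    ∃ (x y : Fin n → K), (x ≠ 0 ∨ y ≠ 0) ∧
      ∑ i, (a i : K) * x i ^ 2 + ∑ i, t * (a i : K) * y i ^ 2 = 0 := by
  obtain ⟨x, hx, hsum⟩ := hres
  -- pick a nonzero coordinate
  obtain ⟨j, hj0⟩ := Function.ne_iff.mp hx
  have hj : x j ≠ 0 := by simpa using hj0
  -- lift all coordinates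
  choose c hc using fun i => hπ (x i)
  -- the constant term
  set s : v.integer := ∑ i ∈ Finset.univ.erase j, a i * c i ^ 2 with hs
  have hπs : π s = ∑ i ∈ Finset.univ.erase j, π (a i) * x i ^ 2 := by
    rw [hs, map_sum]
    exact Finset.sum_congr rfl fun i _ => by rw [map_mul, map_pow, hc]
  set P : Polynomial v.integer := Polynomial.C (a j) * Polynomial.X ^ 2 + Polynomial.C s
    with hP
  have hmap : P.map π = Polynomial.C (π (a j)) * Polynomial.X ^ 2 + Polynomial.C (π s) := by
    simp [hP]
  have hπaj : π (a j) ≠ 0 := by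
    intro h
    rw [hker] at h
    rw [ha j] at h
    exact lt_irrefl _ h
  have heval : (P.map π).eval (x j) = 0 := by
    rw [hmap]
    simp only [Polynomial.eval_add, Polynomial.eval_mul, Polynomial.eval_C,
      Polynomial.eval_pow, Polynomial.eval_X]
    rw [hπs, ← hsum, ← Finset.add_sum_erase _ _ (Finset.mem_univ j)]
  have hderiv : (Polynomial.derivative (P.map π)).eval (x j) ≠ 0 := by
    rw [hmap]
    simp only [Polynomial.derivative_add, Polynomial.derivative_C_mul,
      Polynomial.derivative_C, Polynomial.derivative_X_pow, add_zero,
      Polynomial.eval_mul, Polynomial.eval_C, Polynomial.eval_pow,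
      Polynomial.eval_X]
    simp only [Nat.cast_ofNat, pow_one, Polynomial.eval_mul, Polynomial.eval_C,
      Polynomial.eval_X, Polynomial.eval_natCast]
    rw [pow_one]
    exact mul_ne_zero hπaj (mul_ne_zero hk2 hj)
  obtain ⟨β, hβ1, hβ2⟩ := hhens P (x j) heval hderiv
  have hβne : (β : K) ≠ 0 := by
    intro h
    apply hj
    rw [← hβ1]
    have : β = 0 := Subtype.ext h
    rw [this, map_zero]
  refine ⟨fun i => if i = j then (β : K) else (c i : K), 0, Or.inl ?_, ?_⟩
  · intro h
    apply hβne
    have := congrFun h j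
    simpa using this
  · have hPβ : (a j : K) * (β : K) ^ 2 + (s : K) = 0 := by
      have := hβ2
      rw [hP] at this
      simp only [Polynomial.eval_add, Polynomial.eval_mul, Polynomial.eval_C,
        Polynomial.eval_pow, Polynomial.eval_X] at this
      exact_mod_cast congrArg (fun z : v.integer => (z : K)) this
    have hsK : (s : K) = ∑ i ∈ Finset.univ.erase j, (a i : K) * (c i : K) ^ 2 := by
      rw [hs]
      push_cast
      rfl
    rw [← Finset.add_sum_erase _ _ (Finset.mem_univ j)]
    simp only [if_pos rfl, Pi.zero_apply]
    have : ∑ i ∈ Finset.univ.erase j,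
        (a i : K) * (if i = j then (β : K) else (c i : K)) ^ 2
        = ∑ i ∈ Finset.univ.erase j, (a i : K) * (c i : K) ^ 2 := by
      refine Finset.sum_congr rfl fun i hi => ?_
      rw [if_neg (Finset.ne_of_mem_erase hi)]
    rw [this, ← hsK]
    simp [hPβ]
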